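/- Let φ be a probability generating function φ(r) = Σ_{k≥0} ξ(k) r^k with ξ(0) = 0 and ξ(1) < 1, let c > 0, and suppose ∫_{r}^{1} dx/(c(φ(x)−x)) < ∞ for r near 1 (integral up to 1− finite; note φ(x) < x on (0,1)). Define Φ(r) = ∫_1^r dx/(c(φ(x)−x)) for r ∈ (0,1]. Then Φ(r) → +∞ as r ↓ 0, and moreover as r ↓ 0, Φ'(r) = −1/(β₀ r) − G(r) with β₀ = c(1−ξ(1)) and G bounded near 0. -/

import Mathlib

open Set MeasureTheory Filter

theorem discrete_Phi_properties (ξ : ℕ → ℝ) (c : ℝ) (hc : 0 < c)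
    (hξnn : ∀ k, 0 ≤ ξ k) (hξsum : ∑' k, ξ k = 1)
    (hξ0 : ξ 0 = 0) (hξ1 : ξ 1 < 1)
    (φ : ℝ → ℝ) (hφ : ∀ r ∈ Set.Icc (0:ℝ) 1, φ r = ∑' k, ξ k * r ^ k)
    (hφlt : ∀ x ∈ Set.Ioo (0:ℝ) 1, φ x < x)
    (hint : IntegrableOn (fun x => 1 / (c * (x - φ x))) (Set.Ioo (1/2 : ℝ) 1))
    (Φ : ℝ → ℝ)
    (hΦ : ∀ r ∈ Set.Ioc (0:ℝ) 1, Φ r = ∫ x in Set.Ioo r 1, 1 / (c * (x - φ x))) :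
    Tendsto Φ (nhdsWithin 0 (Set.Ioi 0)) atTop ∧
    ∃ G : ℝ → ℝ, (∃ ε > (0:ℝ), ∃ M : ℝ, ∀ x ∈ Set.Ioo 0 ε, |G x| ≤ M) ∧
      ∀ r ∈ Set.Ioo (0:ℝ) 1,
        HasDerivAt Φ (-(1 / (c * (1 - ξ 1) * r)) - G r) r := by
  set f : ℝ → ℝ := fun x => 1 / (c * (x - φ x)) with hf
  set δ : ℝ := 1 - ξ 1 with hδdef
  have hδ : 0 < δ := by simp only [hδdef]; linarith
  clear_value δ
  -- summability of ξ
  have hsum : Summable ξ := by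
    by_contra h
    rw [tsum_eq_zero_of_not_summable h] at hξsum
    norm_num at hξsum
  have hsum' : ∀ x ∈ Icc (0:ℝ) 1, Summable (fun k => ξ k * x ^ k) := by
    intro x hx
    refine Summable.of_nonneg_of_le (fun k => ?_) (fun k => ?_) hsum
    · exact mul_nonneg (hξnn k) (pow_nonneg hx.1 k)
    · calc ξ k * x ^ k ≤ ξ k * 1 :=
            mul_le_mul_of_nonneg_left (pow_le_one₀ hx.1 hx.2) (hξnn k)
        _ = ξ k := mul_one _
  -- lower bound: ξ 1 * x ≤ φ x on [0,1]
  have hφlb : ∀ x ∈ Icc (0:ℝ) 1, ξ 1 * x ≤ φ x := by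
    intro x hx
    rw [hφ x hx]
    have := Summable.le_tsum (hsum' x hx) 1 (fun j _ => mul_nonneg (hξnn j) (pow_nonneg hx.1 j))
    simpa using this
  -- upper bound: φ x ≤ ξ 1 * x + x ^ 2 on [0,1]
  have hφub : ∀ x ∈ Icc (0:ℝ) 1, φ x ≤ ξ 1 * x + x ^ 2 := by
    intro x hx
    rw [hφ x hx, Summable.tsum_eq_add_tsum_ite (hsum' x hx) 1]
    have h1 : (∑' k, if k = 1 then 0 else ξ k * x ^ k) ≤ ∑' k, ξ k * x ^ 2 := by
      refine Summable.tsum_le_tsum (fun k => ?_) ?_ (hsum.mul_right _)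
      · rcases Nat.lt_or_ge k 2 with hk | hk
        · interval_cases k
          · simp [hξ0]
          · simp only [if_pos rfl]
            exact mul_nonneg (hξnn 1) (sq_nonneg x)
        · have hk1 : k ≠ 1 := by omega
          simp only [hk1, if_false]
          refine mul_le_mul_of_nonneg_left ?_ (hξnn k)
          calc x ^ k = x ^ 2 * x ^ (k - 2) := by rw [← pow_add]; congr 1; omega
            _ ≤ x ^ 2 * 1 :=
                mul_le_mul_of_nonneg_left (pow_le_one₀ hx.1 hx.2) (by positivity)
            _ = x ^ 2 := mul_one _
      · refine Summable.of_nonneg_of_le (fun k => ?_) (fun k => ?_) (hsum' x hx)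
        · split
          · exact le_refl 0
          · exact mul_nonneg (hξnn k) (pow_nonneg hx.1 k)
        · split
          · exact mul_nonneg (hξnn k) (pow_nonneg hx.1 k)
          · exact le_refl _
    have h2 : (∑' k, ξ k * x ^ 2) = x ^ 2 := by
      rw [tsum_mul_right, hξsum, one_mul]
    rw [pow_one]
    linarith [h1, h2]
  have hpos : ∀ x ∈ Ioo (0:ℝ) 1, 0 < x - φ x := fun x hx => sub_pos.2 (hφlt x hx)
  -- continuity of φ on [0,1]
  have hφcont : ContinuousOn φ (Icc (0:ℝ) 1) := by
    have hF : ContinuousOn (fun x => ∑' k, ξ k * x ^ k) (Icc (0:ℝ) 1) := by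
      refine (tendstoUniformlyOn_tsum hsum (fun n x hx => ?_)).continuousOn
        (Frequently.of_forall fun t => ?_)
      · rw [Real.norm_eq_abs, abs_mul, abs_of_nonneg (hξnn n), abs_pow,
          abs_of_nonneg hx.1]
        calc ξ n * x ^ n ≤ ξ n * 1 :=
              mul_le_mul_of_nonneg_left (pow_le_one₀ hx.1 hx.2) (hξnn n)
          _ = ξ n := mul_one _
      · exact continuousOn_finset_sum t fun i _ =>
          (continuousOn_const.mul (continuousOn_pow i))
    exact hF.congr hφ
  -- continuity of f on (0,1)
  have hfcont : ContinuousOn f (Ioo (0:ℝ) 1) := by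
    refine continuousOn_const.div
      (continuousOn_const.mul (continuousOn_id.sub (hφcont.mono Ioo_subset_Icc_self)))
      (fun x hx => ?_)
    exact ne_of_gt (mul_pos hc (hpos x hx))
  -- integrability of f on (r,1)
  have hfint : ∀ r ∈ Ioo (0:ℝ) 1, IntegrableOn f (Ioo r 1) := by
    intro r hr
    rcases lt_or_ge r (1/2 : ℝ) with h | h
    · have hsub : Ioo r 1 ⊆ Icc r (1/2) ∪ Ioo (1/2) 1 := by
        intro x hx
        rcases le_or_gt x (1/2) with hx2 | hx2
        · exact Or.inl ⟨hx.1.le, hx2⟩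
        · exact Or.inr ⟨hx2, hx.2⟩
      refine (IntegrableOn.union ?_ hint).mono_set hsub
      refine (hfcont.mono ?_).integrableOn_Icc
      intro x hx
      exact ⟨lt_of_lt_of_le hr.1 hx.1, lt_of_le_of_lt hx.2 (by norm_num)⟩
    · exact hint.mono_set (Ioo_subset_Ioo h le_rfl)
  -- Φ agrees with the interval integral on (0,1)
  have hΦeq : ∀ r ∈ Ioo (0:ℝ) 1, Φ r = ∫ x in r..1, f x := by
    intro r hr
    rw [hΦ r ⟨hr.1, hr.2.le⟩, intervalIntegral.integral_of_le hr.2.le,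
      integral_Ioc_eq_integral_Ioo]
  -- the derivative
  have hderiv : ∀ r ∈ Ioo (0:ℝ) 1, HasDerivAt Φ (-f r) r := by
    intro r hr
    have hII : IntervalIntegrable f volume r 1 := by
      rw [intervalIntegrable_iff_integrableOn_Ioc_of_le hr.2.le]
      exact (hfint r hr).congr_set_ae Ioo_ae_eq_Ioc.symm
    have hmeas : StronglyMeasurableAtFilter f (nhds r) volume :=
      hfcont.stronglyMeasurableAtFilter isOpen_Ioo r hr
    have hca : ContinuousAt f r := hfcont.continuousAt (isOpen_Ioo.mem_nhds hr)
    have hd := intervalIntegral.integral_hasDerivAt_left hII hmeas hca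
    refine hd.congr_of_eventuallyEq ?_
    filter_upwards [isOpen_Ioo.mem_nhds hr] with u hu
    exact hΦeq u hu
  constructor
  · -- Tendsto Φ (𝓝[>] 0) atTop
    have hlog : Tendsto (fun r : ℝ => (c * δ)⁻¹ * (-Real.log r))
        (nhdsWithin 0 (Ioi 0)) atTop := by
      refine Tendsto.const_mul_atTop (by positivity) ?_
      exact tendsto_neg_atBot_atTop.comp Real.tendsto_log_nhdsGT_zero
    refine tendsto_atTop_mono' _ ?_ hlog
    filter_upwards [Ioo_mem_nhdsGT_of_mem (Set.mem_Ico.2 ⟨le_refl (0:ℝ), zero_lt_one⟩)]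
      with r hr
    -- show (c*δ)⁻¹ * (-log r) ≤ Φ r
    have hgle : ∀ x ∈ Ioo r 1, (c * δ)⁻¹ * x⁻¹ ≤ f x := by
      intro x hx
      have hx01 : x ∈ Ioo (0:ℝ) 1 := ⟨lt_trans hr.1 hx.1, hx.2⟩
      have h1 : 0 < x - φ x := hpos x hx01
      have h2 : x - φ x ≤ δ * x := by
        have := hφlb x ⟨hx01.1.le, hx01.2.le⟩
        simp only [hδdef]; nlinarith
      have : 1 / (c * (δ * x)) ≤ 1 / (c * (x - φ x)) :=
        one_div_le_one_div_of_le (mul_pos hc h1) (by nlinarith)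
      calc (c * δ)⁻¹ * x⁻¹ = 1 / (c * (δ * x)) := by
            rw [one_div, ← mul_inv, mul_assoc]
        _ ≤ f x := this
    have hgint : IntegrableOn (fun x => (c * δ)⁻¹ * x⁻¹) (Ioo r 1) := by
      refine ((continuousOn_const.mul (continuousOn_inv₀.mono ?_)).integrableOn_Icc).mono_set
        Ioo_subset_Icc_self
      intro x hx
      exact ne_of_gt (lt_of_lt_of_le hr.1 hx.1)
    have hmono := setIntegral_mono_on hgint (hfint r hr) measurableSet_Ioo hgle
    have hcalc : (∫ x in Ioo r 1, (c * δ)⁻¹ * x⁻¹) = (c * δ)⁻¹ * (-Real.log r) := by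
      rw [← integral_Ioc_eq_integral_Ioo, ← intervalIntegral.integral_of_le hr.2.le,
        intervalIntegral.integral_const_mul, integral_inv_of_pos hr.1 zero_lt_one,
        one_div, Real.log_inv]
    rw [hΦ r ⟨hr.1, hr.2.le⟩]
    calc (c * δ)⁻¹ * (-Real.log r) = ∫ x in Ioo r 1, (c * δ)⁻¹ * x⁻¹ := hcalc.symm
      _ ≤ ∫ x in Ioo r 1, f x := hmono
  · -- the G part
    refine ⟨fun r => 1 / (c * (r - φ r)) - 1 / (c * δ * r),
      ⟨min (1/2) (δ/2), lt_min (by norm_num) (by linarith), 2 / (c * δ ^ 2), ?_⟩, ?_⟩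
    · intro x hx
      have hx1 : x < 1/2 := lt_of_lt_of_le hx.2 (min_le_left _ _)
      have hxδ : x < δ/2 := lt_of_lt_of_le hx.2 (min_le_right _ _)
      have hx01 : x ∈ Ioo (0:ℝ) 1 := ⟨hx.1, by linarith⟩
      have hIcc : x ∈ Icc (0:ℝ) 1 := ⟨hx.1.le, by linarith⟩
      have h1 : 0 < x - φ x := hpos x hx01
      have hA : 0 < c * (x - φ x) := mul_pos hc h1
      have hB : 0 < c * δ * x := mul_pos (mul_pos hc hδ) hx.1
      have hub := hφub x hIcc
      have hlb := hφlb x hIcc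
      -- nonnegativity of G x : 1/(c*(x-φx)) ≥ 1/(c*δ*x)
      have hG0 : 0 ≤ 1 / (c * (x - φ x)) - 1 / (c * δ * x) := by
        have h2 : c * (x - φ x) ≤ c * δ * x := by
          simp only [hδdef]; nlinarith
        linarith [one_div_le_one_div_of_le hA h2]
      rw [abs_of_nonneg hG0]
      -- identity and bound
      have hid : 1 / (c * (x - φ x)) - 1 / (c * δ * x)
          = (φ x - ξ 1 * x) / (c * (x - φ x) * (δ * x)) := by
        rw [div_sub_div _ _ (ne_of_gt hA) (ne_of_gt hB)]
        rw [div_eq_div_iff (ne_of_gt (mul_pos hA hB)) (ne_of_gt (mul_pos hA (mul_pos hδ hx.1)))]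
        simp only [hδdef]
        ring
      rw [hid]
      rw [div_le_div_iff₀ (mul_pos hA (mul_pos hδ hx.1)) (mul_pos hc (pow_pos hδ 2))]
      -- (φ x - ξ 1 x) * (c δ²) ≤ 2 * (c (x-φx) (δ x))
      have hnum : φ x - ξ 1 * x ≤ x ^ 2 := by linarith
      have hden : δ * x - x ^ 2 ≤ x - φ x := by simp only [hδdef]; nlinarith
      have e1 : (φ x - ξ 1 * x) * (c * δ ^ 2) ≤ x ^ 2 * (c * δ ^ 2) :=
        mul_le_mul_of_nonneg_right hnum (mul_pos hc (pow_pos hδ 2)).le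
      have e2 : δ / 2 * x ≤ x - φ x := by
        nlinarith [mul_lt_mul_of_pos_right hxδ hx.1]
      have e3 : 2 * (c * (δ / 2 * x) * (δ * x)) ≤ 2 * (c * (x - φ x) * (δ * x)) := by
        have h5 : c * (δ / 2 * x) ≤ c * (x - φ x) := mul_le_mul_of_nonneg_left e2 hc.le
        have h6 := mul_le_mul_of_nonneg_right h5 (mul_pos hδ hx.1).le
        linarith
      have e4 : x ^ 2 * (c * δ ^ 2) = 2 * (c * (δ / 2 * x) * (δ * x)) := by ring
      linarith
    · intro r hr
      have hd := hderiv r hr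
      have heq : -(1 / (c * δ * r)) - (1 / (c * (r - φ r)) - 1 / (c * δ * r))
          = -f r := by
        simp only [hf]
        ring
      show HasDerivAt Φ (-(1 / (c * δ * r)) - (1 / (c * (r - φ r)) - 1 / (c * δ * r))) r
      rw [heq]
      exact hd
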